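/- For all positive integers r and n, the number N of (rn,n)-Dyck paths satisfies ((r+1)n − 1)·N = binom((r+1)n − 1, n); that is, N equals the rational Catalan number Cat(n, rn−1) = (1/(rn−1+n))·binom(rn−1+n, n). -/

import Mathlib

/-- A single step of a monotone lattice path: move one unit right or one unit up. -/
def GridStep (p q : ℕ × ℕ) : Prop := q = (p.1 + 1, p.2) ∨ q = (p.1, p.2 + 1)

/-- `L` is (the sequence of squares of) an `(rn, n)`-Dyck path in the `rn × n` grid:
`rn + n - 1` squares from `(1,1)` to `(rn, n)`, each obtained from the previous one
by a unit step, with every square `(i,j)` satisfying `i ≤ r * j`. -/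
def IsRatDyckPath (r n : ℕ) (L : List (ℕ × ℕ)) : Prop :=
  L.length = r * n + n - 1 ∧
  L.head? = some (1, 1) ∧
  L.getLast? = some (r * n, n) ∧
  L.Chain' GridStep ∧
  (∀ p ∈ L, p.1 ≤ r * p.2)

namespace RatCat

/-- prefix sums of the periodic extension of `v` -/
def S (v : List ℤ) (m : ℕ) : ℤ := ∑ i ∈ Finset.range m, v.getD (i % v.length) 0

/-- all nonempty prefix sums (within one period) are positive -/
def Good (v : List ℤ) : Prop := ∀ j, 1 ≤ j → j ≤ v.length → 1 ≤ S v j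

instance Good.dec (v : List ℤ) : Decidable (Good v) :=
  decidable_of_iff (∀ j ≤ v.length, 1 ≤ j → 1 ≤ S v j) (by unfold Good; tauto)

lemma sum_take_eq (v : List ℤ) (m : ℕ) :
    (v.take m).sum = ∑ i ∈ Finset.range m, v.getD i 0 := by
  induction m with
  | zero => simp
  | succ m ih =>
    rw [Finset.sum_range_succ, ← ih, List.take_succ, List.sum_append]
    congr 1
    rw [List.getD_eq_getElem?_getD]
    cases h : v[m]? <;> simp [h]

lemma S_eq_take (v : List ℤ) {m : ℕ} (hm : m ≤ v.length) :
    S v m = (v.take m).sum := by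
  rw [sum_take_eq, S]
  refine Finset.sum_congr rfl fun i hi => ?_
  simp only [Finset.mem_range] at hi
  rw [Nat.mod_eq_of_lt (lt_of_lt_of_le hi hm)]

lemma window (v : List ℤ) (m : ℕ) :
    (∑ i ∈ Finset.range v.length, v.getD ((m + i) % v.length) 0) = v.sum := by
  induction m with
  | zero =>
    have : (v.take v.length).sum = v.sum := by rw [List.take_length]
    rw [← this, sum_take_eq]
    refine Finset.sum_congr rfl fun i hi => ?_
    simp only [Finset.mem_range] at hi
    rw [Nat.zero_add, Nat.mod_eq_of_lt hi]
  | succ m ih =>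
    rw [← ih]
    set g : ℕ → ℤ := fun i => v.getD ((m + i) % v.length) 0 with hg
    have hgL : g v.length = g 0 := by
      simp only [hg, Nat.add_zero, Nat.add_mod_right]
    have h1 := Finset.sum_range_succ' g v.length
    have h2 := Finset.sum_range_succ g v.length
    have key : ∑ i ∈ Finset.range v.length, g (i + 1) = ∑ i ∈ Finset.range v.length, g i := by
      rw [h2, hgL] at h1; linarith
    calc (∑ i ∈ Finset.range v.length, v.getD ((m + 1 + i) % v.length) 0)
        = ∑ i ∈ Finset.range v.length, g (i + 1) := by
          refine Finset.sum_congr rfl fun i _ => ?_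
          simp only [hg]
          congr 2
          omega
      _ = ∑ i ∈ Finset.range v.length, g i := key

lemma S_add_len (v : List ℤ) (m : ℕ) : S v (m + v.length) = S v m + v.sum := by
  rw [S, Finset.sum_range_add, ← S]
  congr 1
  exact window v m

lemma S_rotate (v : List ℤ) (k : ℕ) (hk : k < v.length) (j : ℕ) :
    S (v.rotate k) j = S v (k + j) - S v k := by
  have hL : (v.rotate k).length = v.length := List.length_rotate v k
  have h0 : 0 < v.length := lt_of_le_of_lt (Nat.zero_le _) hk
  have hgd : ∀ i : ℕ, (v.rotate k).getD (i % (v.rotate k).length) 0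
      = v.getD ((i + k) % v.length) 0 := by
    intro i
    have h1 : i % v.length < (v.rotate k).length := by rw [hL]; exact Nat.mod_lt _ h0
    have h2 : (i + k) % v.length < v.length := Nat.mod_lt _ h0
    rw [hL, List.getD_eq_getElem?_getD, List.getD_eq_getElem?_getD,
      List.getElem?_eq_getElem h1, List.getElem?_eq_getElem h2]
    simp only [Option.getD_some]
    rw [List.getElem_rotate]
    simp [Nat.mod_add_mod]
  have hS : S (v.rotate k) j = ∑ i ∈ Finset.range j, v.getD ((k + i) % v.length) 0 := by
    rw [S]
    refine Finset.sum_congr rfl fun i _ => ?_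
    rw [hgd i]
    congr 2
    omega
  rw [hS]
  have := Finset.sum_range_add (fun i => v.getD (i % v.length) 0) k j
  rw [S, S, this]
  ring_nf

end RatCat

namespace RatCat2
open RatCat

lemma good_rotate_iff (v : List ℤ) (k : ℕ) (hk : k < v.length) :
    Good (v.rotate k) ↔ ∀ j, 1 ≤ j → j ≤ v.length → S v k + 1 ≤ S v (k + j) := by
  unfold Good
  rw [List.length_rotate]
  constructor
  · intro h j h1 h2
    have := h j h1 h2
    rw [S_rotate v k hk j] at this
    omega
  · intro h j h1 h2
    rw [S_rotate v k hk j]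
    have := h j h1 h2
    omega

lemma cycle_lemma (v : List ℤ) (hs : v.sum = 1) :
    ∃! k : ℕ, k < v.length ∧ Good (v.rotate k) := by
  have h0 : 0 < v.length := by
    rcases v with _ | ⟨a, t⟩
    · simp at hs
    · simp
  have hper : ∀ x : ℕ, S v (x + v.length) = S v x + 1 := by
    intro x; rw [S_add_len, hs]
  set L := v.length with hLdef
  have hne : (Finset.range L).Nonempty := ⟨0, by simpa using h0⟩
  obtain ⟨m, hmmem, hmmin⟩ := Finset.exists_min_image (Finset.range L) (S v) hne
  set mv := S v m with hmv
  have hmin : ∀ t, t < L → mv ≤ S v t := by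
    intro t ht; exact hmmin t (Finset.mem_range.mpr ht)
  set A := (Finset.range L).filter (fun k => S v k = mv) with hA
  have hAne : A.Nonempty := ⟨m, by simp [hA, hmmem, hmv]⟩
  set k₀ := A.max' hAne with hk₀
  have hk₀A : k₀ ∈ A := A.max'_mem hAne
  have hk₀L : k₀ < L := by
    have := hk₀A; rw [hA, Finset.mem_filter, Finset.mem_range] at this; exact this.1
  have hk₀v : S v k₀ = mv := by
    have := hk₀A; rw [hA, Finset.mem_filter] at this; exact this.2
  have hmax : ∀ t, k₀ < t → t < L → mv + 1 ≤ S v t := by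
    intro t h1 h2
    have hge := hmin t h2
    rcases eq_or_lt_of_le hge with he | hl
    · exfalso
      have : t ∈ A := by rw [hA, Finset.mem_filter, Finset.mem_range]; exact ⟨h2, he.symm⟩
      have := A.le_max' t this
      omega
    · omega
  have hgood : Good (v.rotate k₀) := by
    rw [good_rotate_iff v k₀ hk₀L]
    intro j h1 h2
    rw [hk₀v]
    by_cases hc : k₀ + j < L
    · exact hmax _ (by omega) hc
    · have ht : k₀ + j = (k₀ + j - L) + L := by omega
      rw [ht, hper]
      have : mv ≤ S v (k₀ + j - L) := hmin _ (by omega)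
      omega
  refine ⟨k₀, ⟨hk₀L, hgood⟩, ?_⟩
  rintro k' ⟨hk'L, hk'good⟩
  rw [good_rotate_iff v k' hk'L] at hk'good
  -- S v k' = mv
  have hle : ∀ t, t < L → S v k' ≤ S v t := by
    intro t ht
    by_cases hc : k' < t
    · have := hk'good (t - k') (by omega) (by omega)
      have he : k' + (t - k') = t := by omega
      rw [he] at this; omega
    · have := hk'good (t + L - k') (by omega) (by omega)
      have he : k' + (t + L - k') = t + L := by omega
      rw [he, hper] at this; omega
  have hk'v : S v k' = mv := le_antisymm (hle m (Finset.mem_range.mp hmmem)) (hmin k' hk'L)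
  have h1 : k' ≤ k₀ := A.le_max' k' (by rw [hA, Finset.mem_filter, Finset.mem_range]; exact ⟨hk'L, hk'v⟩)
  have h2 : k₀ ≤ k' := by
    by_contra hc
    push_neg at hc
    have := hk'good (k₀ - k') (by omega) (by omega)
    have he : k' + (k₀ - k') = k₀ := by omega
    rw [he, hk₀v, hk'v] at this
    omega
  omega

end RatCat2

namespace RatCat3
open RatCat RatCat2

def bval (r : ℕ) (b : Bool) : ℤ := if b then (r : ℤ) else -1

lemma count_true_eq_sum (w : List Bool) :
    ((w.count true : ℕ) : ℤ) = (w.map (fun b => if b then (1:ℤ) else 0)).sum := by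
  induction w with
  | nil => simp
  | cons a t ih => cases a <;> simp [List.count_cons, ih] <;> push_cast <;> ring

lemma sum_vals (r : ℕ) (w : List Bool) :
    (w.map (bval r)).sum = (r : ℤ) * (w.count true : ℤ) - ((w.length : ℤ) - (w.count true : ℤ)) := by
  induction w with
  | nil => simp
  | cons a t ih =>
    cases a <;> simp [List.count_cons, bval, ih] <;> push_cast <;> ring

lemma count_ofFn_eq_card {L : ℕ} (f : Fin L → Bool) :
    (List.ofFn f).count true = (Finset.univ.filter (fun i => f i = true)).card := by
  have h1 := count_true_eq_sum (List.ofFn f)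
  rw [List.map_ofFn, List.sum_ofFn] at h1
  have h2 : (((Finset.univ.filter (fun i => f i = true)).card : ℕ) : ℤ)
      = ∑ i : Fin L, (if f i then (1:ℤ) else 0) := by
    rw [Finset.card_filter]
    push_cast
    apply Finset.sum_congr rfl
    intro i _
    by_cases h : f i = true <;> simp [h]
  have : ((( List.ofFn f).count true : ℕ) : ℤ) = (((Finset.univ.filter (fun i => f i = true)).card : ℕ) : ℤ) := by
    rw [h1, h2]
    rfl
  exact_mod_cast this

def rot {L : ℕ} (k : Fin L) (f : Fin L → Bool) : Fin L → Bool := fun i => f (i + k)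

lemma ofFn_rot {L : ℕ} (k : Fin L) (f : Fin L → Bool) :
    List.ofFn (rot k f) = (List.ofFn f).rotate k.val := by
  apply List.ext_get
  · simp
  · intro i h1 h2
    simp only [List.get_eq_getElem, List.getElem_ofFn, List.getElem_rotate]
    have hL : (List.ofFn f).length = L := by simp
    simp only [hL]
    unfold rot
    congr 1

lemma count_rot {L : ℕ} (k : Fin L) (f : Fin L → Bool) :
    (List.ofFn (rot k f)).count true = (List.ofFn f).count true := by
  rw [ofFn_rot]
  exact (List.rotate_perm _ _).count_eq true

lemma rot_rot {L : ℕ} (k k' : Fin L) (f : Fin L → Bool) :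
    rot k (rot k' f) = fun i => f (i + k + k') := by
  funext i; rfl

lemma card_count_n (L n : ℕ) :
    (Finset.univ.filter (fun f : Fin L → Bool => (List.ofFn f).count true = n)).card
      = Nat.choose L n := by
  have := Finset.card_powersetCard n (Finset.univ : Finset (Fin L))
  rw [Finset.card_univ, Fintype.card_fin] at this
  rw [← this]
  apply Finset.card_bij (fun f _ => Finset.univ.filter (fun i => f i = true))
  · intro f hf
    rw [Finset.mem_filter] at hf
    rw [Finset.mem_powersetCard]
    exact ⟨Finset.filter_subset _ _, by rw [← count_ofFn_eq_card]; exact hf.2⟩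
  · intro f hf g hg h
    funext i
    have h2 := Finset.ext_iff.mp h i
    simp only [Finset.mem_filter, Finset.mem_univ, true_and] at h2
    by_cases hfi : f i = true <;> by_cases hgi : g i = true <;> simp_all
  · intro s hs
    rw [Finset.mem_powersetCard] at hs
    refine ⟨fun i => decide (i ∈ s), ?_, ?_⟩
    · rw [Finset.mem_filter]
      refine ⟨Finset.mem_univ _, ?_⟩
      rw [count_ofFn_eq_card]
      rw [← hs.2]
      congr 1
      ext i
      simp
    · ext i
      simp

end RatCat3

namespace RatCat4
open RatCat RatCat2 RatCat3

lemma L_mul_good_card (r n L : ℕ) (hr : 0 < r) (hn : 0 < n) (hL : L = r * n + n - 1) :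
    L * (Finset.univ.filter (fun f : Fin L → Bool =>
        (List.ofFn f).count true = n ∧ Good ((List.ofFn f).map (bval r)))).card
      = Nat.choose L n := by
  classical
  have hrn : 0 < r * n := Nat.mul_pos hr hn
  have hL0 : 0 < L := by omega
  haveI : NeZero L := ⟨by omega⟩
  have sum1 : ∀ f : Fin L → Bool, (List.ofFn f).count true = n →
      ((List.ofFn f).map (bval r)).sum = 1 := by
    intro f hf
    rw [sum_vals, hf, List.length_ofFn]
    have h1 : ((r : ℤ) * (n : ℤ)) = ((r * n : ℕ) : ℤ) := by push_cast; ring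
    rw [h1]
    omega
  have per_f : ∀ f : Fin L → Bool, (List.ofFn f).count true = n →
      (Finset.univ.filter (fun k : Fin L =>
        Good ((List.ofFn (rot k f)).map (bval r)))).card = 1 := by
    intro f hf
    have hv : ∀ k : Fin L, (List.ofFn (rot k f)).map (bval r)
        = ((List.ofFn f).map (bval r)).rotate k.val := by
      intro k; rw [ofFn_rot, List.map_rotate]
    have hlen : ((List.ofFn f).map (bval r)).length = L := by simp
    obtain ⟨k', hk', huniq⟩ := cycle_lemma _ (sum1 f hf)
    rw [hlen] at hk'
    rw [Finset.card_eq_one]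
    refine ⟨⟨k', hk'.1⟩, ?_⟩
    ext k
    simp only [Finset.mem_filter, Finset.mem_univ, true_and, Finset.mem_singleton]
    constructor
    · intro hk
      have : (k : ℕ) = k' := by
        apply huniq
        constructor
        · rw [hlen]; exact k.isLt
        · rw [← hv]; exact hk
      exact Fin.ext this
    · intro he
      subst he
      rw [hv]
      exact hk'.2
  have per_k : ∀ k : Fin L,
      (Finset.univ.filter (fun f : Fin L → Bool =>
        (List.ofFn f).count true = n ∧ Good ((List.ofFn (rot k f)).map (bval r)))).card
      = (Finset.univ.filter (fun f : Fin L → Bool =>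
        (List.ofFn f).count true = n ∧ Good ((List.ofFn f).map (bval r)))).card := by
    intro k
    apply Finset.card_nbij' (fun f => rot k f) (fun g => rot (-k) g)
    · intro f hf
      dsimp only at hf ⊢
      rw [Finset.mem_coe, Finset.mem_filter] at hf ⊢
      refine ⟨Finset.mem_univ _, ?_, hf.2.2⟩
      rw [count_rot]; exact hf.2.1
    · intro g hg
      dsimp only at hg ⊢
      rw [Finset.mem_coe, Finset.mem_filter] at hg ⊢
      refine ⟨Finset.mem_univ _, ?_, ?_⟩
      · rw [count_rot]; exact hg.2.1
      · have : rot k (rot (-k) g) = g := by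
          funext i
          show g (i + k + -k) = g i
          rw [add_neg_cancel_right]
        rw [this]
        exact hg.2.2
    · intro f _
      funext i
      show f (i + -k + k) = f i
      rw [neg_add_cancel_right]
    · intro g _
      funext i
      show g (i + k + -k) = g i
      rw [add_neg_cancel_right]
  have main : ∑ k : Fin L, (Finset.univ.filter (fun f : Fin L → Bool =>
        (List.ofFn f).count true = n ∧ Good ((List.ofFn (rot k f)).map (bval r)))).card
      = ∑ f : Fin L → Bool, (Finset.univ.filter (fun k : Fin L =>
        (List.ofFn f).count true = n ∧ Good ((List.ofFn (rot k f)).map (bval r)))).card := by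
    simp only [Finset.card_filter]
    exact Finset.sum_comm
  have lhs : ∑ k : Fin L, (Finset.univ.filter (fun f : Fin L → Bool =>
        (List.ofFn f).count true = n ∧ Good ((List.ofFn (rot k f)).map (bval r)))).card
      = L * (Finset.univ.filter (fun f : Fin L → Bool =>
        (List.ofFn f).count true = n ∧ Good ((List.ofFn f).map (bval r)))).card := by
    rw [Finset.sum_congr rfl (fun k _ => per_k k)]
    rw [Finset.sum_const, Finset.card_univ, Fintype.card_fin, smul_eq_mul]
  have rhs : ∑ f : Fin L → Bool, (Finset.univ.filter (fun k : Fin L =>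
        (List.ofFn f).count true = n ∧ Good ((List.ofFn (rot k f)).map (bval r)))).card
      = Nat.choose L n := by
    have step : ∀ f : Fin L → Bool, (Finset.univ.filter (fun k : Fin L =>
        (List.ofFn f).count true = n ∧ Good ((List.ofFn (rot k f)).map (bval r)))).card
        = if (List.ofFn f).count true = n then 1 else 0 := by
      intro f
      by_cases hf : (List.ofFn f).count true = n
      · rw [if_pos hf, ← per_f f hf]
        congr 1
        apply Finset.filter_congr
        intro k _
        simp [hf]
      · rw [if_neg hf]
        rw [Finset.card_eq_zero, Finset.filter_eq_empty_iff]
        intro k _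
        simp [hf]
    rw [Finset.sum_congr rfl (fun f _ => step f)]
    rw [← Finset.card_filter]
    exact card_count_n L n
  rw [← lhs, main, rhs]

end RatCat4

namespace RatCat5
open RatCat RatCat2 RatCat3 RatCat4

def pathOf (w : List Bool) : List (ℕ × ℕ) :=
  (List.range w.length).map
    (fun k => (k + 2 - (w.take (k+1)).count true, (w.take (k+1)).count true))

lemma count_take_le (w : List Bool) (m : ℕ) : (w.take m).count true ≤ m :=
  le_trans (List.count_le_length) (by rw [List.length_take]; exact Nat.min_le_left _ _)

lemma count_take_succ (w : List Bool) (k : ℕ) (hk : k < w.length) :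
    (w.take (k+1)).count true = (w.take k).count true + (if w[k] = true then 1 else 0) := by
  rw [List.take_succ, List.count_append]
  congr 1
  rw [List.getElem?_eq_getElem hk]
  by_cases h : w[k] = true <;> simp [h]

lemma S_take (r : ℕ) (w : List Bool) (m : ℕ) (hm : m ≤ w.length) :
    S (w.map (bval r)) m
      = (r : ℤ) * ((w.take m).count true : ℤ)
        - ((m : ℤ) - ((w.take m).count true : ℤ)) := by
  rw [S_eq_take _ (by rw [List.length_map]; exact hm), ← List.map_take, sum_vals]
  have hlen : (w.take m).length = m := by rw [List.length_take]; omega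
  rw [hlen]

lemma pathOf_getElem? (w : List Bool) (k : ℕ) (hk : k < w.length) :
    (pathOf w)[k]? = some (k + 2 - (w.take (k+1)).count true, (w.take (k+1)).count true) := by
  rw [pathOf, List.getElem?_map, List.getElem?_range hk, Option.map_some]

lemma pathOf_isDyck (r n : ℕ) (hr : 0 < r) (hn : 0 < n) (w : List Bool)
    (hlen : w.length = r * n + n - 1) (hcount : w.count true = n)
    (hgood : Good (w.map (bval r))) :
    IsRatDyckPath r n (pathOf w) := by
  have hrn : 0 < r * n := Nat.mul_pos hr hn
  have hL0 : 0 < w.length := by omega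
  -- positivity: for 1 ≤ m ≤ length,  m + 1 ≤ r*c + c  where c = count of take m
  have pos : ∀ m, 1 ≤ m → m ≤ w.length →
      (m:ℤ) + 1 ≤ (r:ℤ) * ((w.take m).count true : ℤ) + ((w.take m).count true : ℤ) := by
    intro m h1 h2
    have := hgood m h1 (by rw [List.length_map]; exact h2)
    rw [S_take r w m h2] at this
    omega
  have hplen : (pathOf w).length = w.length := by simp [pathOf]
  refine ⟨by rw [hplen, hlen], ?_, ?_, ?_, ?_⟩
  · -- head?
    rw [List.head?_eq_getElem?, pathOf_getElem? w 0 hL0]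
    have h1 : (w.take 1).count true ≤ 1 := count_take_le w 1
    have h2 := pos 1 le_rfl hL0
    have h3 : (w.take 1).count true = 1 := by
      rcases Nat.le_one_iff_eq_zero_or_eq_one.mp h1 with h | h
      · rw [h] at h2; simp at h2
      · exact h
    rw [h3]
  · -- getLast?
    rw [List.getLast?_eq_getElem?, hplen, pathOf_getElem? w (w.length - 1) (by omega)]
    have he : w.length - 1 + 1 = w.length := by omega
    rw [he, List.take_length, hcount]
    have : w.length - 1 + 2 - n = r * n := by omega
    rw [this]
  · -- chain'
    rw [pathOf]
    change List.IsChain _ _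
    rw [List.isChain_map]
    obtain ⟨M, hM⟩ : ∃ M, w.length = M + 1 := ⟨w.length - 1, by omega⟩
    rw [hM, List.isChain_range_succ]
    intro m hm
    have hmlt : m + 1 < w.length := by omega
    have hc := count_take_succ w (m+1) hmlt
    have hle : (w.take (m+1)).count true ≤ m + 1 := count_take_le w (m+1)
    simp only [GridStep, Prod.mk.injEq, Nat.succ_eq_add_one]
    by_cases hb : w[m+1] = true
    · rw [if_pos hb] at hc
      right
      omega
    · rw [if_neg hb] at hc
      left
      omega
  · -- bound
    intro p hp
    rw [pathOf, List.mem_map] at hp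
    obtain ⟨k, hk, hpk⟩ := hp
    rw [List.mem_range] at hk
    have h2 := pos (k+1) (by omega) (by omega)
    have hle : (w.take (k+1)).count true ≤ k + 1 := count_take_le w (k+1)
    rw [← hpk]
    simp only []
    have h3 : k + 1 + 1 ≤ r * ((w.take (k+1)).count true) + (w.take (k+1)).count true := by
      have : ((r * ((w.take (k+1)).count true) : ℕ) : ℤ)
          = (r:ℤ) * ((w.take (k+1)).count true : ℤ) := by push_cast; ring
      omega
    generalize hq : r * ((w.take (k+1)).count true) = q at h3 ⊢
    omega

lemma pathOf_inj (w w' : List Bool) (h : w.length = w'.length)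
    (hp : pathOf w = pathOf w') : w = w' := by
  have key : ∀ m, m ≤ w.length → (w.take m).count true = (w'.take m).count true := by
    intro m hm
    rcases Nat.eq_zero_or_pos m with h0 | h0
    · subst h0; simp
    · have hk : m - 1 < w.length := by omega
      have e1 := pathOf_getElem? w (m-1) hk
      have e2 := pathOf_getElem? w' (m-1) (by omega)
      rw [hp, e2] at e1
      have := Option.some.inj e1
      have h2 := congrArg Prod.snd this
      simp only [] at h2
      have he : m - 1 + 1 = m := by omega
      rw [he] at h2
      exact h2.symm
  apply List.ext_getElem h
  intro k h1 h2
  have e0 := key k (by omega)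
  have e1 := key (k+1) (by omega)
  rw [count_take_succ w k h1, count_take_succ w' k h2, e0] at e1
  by_cases hb : w[k] = true <;> by_cases hb' : w'[k] = true <;> simp [hb, hb'] at e1 ⊢ <;> simp_all

end RatCat5

namespace RatCat6
open RatCat RatCat2 RatCat3 RatCat4 RatCat5

lemma dyck_eq_pathOf (r n : ℕ) (hr : 0 < r) (hn : 0 < n) (P : List (ℕ × ℕ))
    (hP : IsRatDyckPath r n P) :
    ∃ w : List Bool, w.length = r * n + n - 1 ∧ w.count true = n ∧
      Good (w.map (bval r)) ∧ pathOf w = P := by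
  obtain ⟨hlen, hhead, hlast, hchain, hbound⟩ := hP
  have hrn : 0 < r * n := Nat.mul_pos hr hn
  have hL0 : 0 < P.length := by omega
  set f : Fin P.length → Bool := fun i =>
    if i.val = 0 then true
    else decide ((P.getD i.val (0,0)).2 = (P.getD (i.val - 1) (0,0)).2 + 1) with hf
  set w : List Bool := List.ofFn f with hw
  have hwlen : w.length = P.length := by simp [hw]
  have hwget : ∀ k (hk : k < P.length), w[k]'(by omega) = f ⟨k, hk⟩ := by
    intro k hk
    simp [hw]
  have hP0 : P.getD 0 (0,0) = (1,1) := by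
    rw [List.head?_eq_getElem?] at hhead
    rw [List.getD_eq_getElem?_getD, hhead]
    rfl
  -- the invariant
  have inv : ∀ k, k < P.length →
      P.getD k (0,0) = (k + 2 - (w.take (k+1)).count true, (w.take (k+1)).count true) := by
    intro k
    induction k with
    | zero =>
      intro hk
      have hc := count_take_succ w 0 (by omega)
      rw [hwget 0 hL0] at hc
      have hf0 : f ⟨0, hL0⟩ = true := by simp [hf]
      rw [hf0, if_pos rfl] at hc
      simp only [List.take_zero, List.count_nil, Nat.zero_add] at hc
      rw [hP0, hc]
    | succ k ih =>
      intro hk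
      have hklt : k < P.length := by omega
      have ihk := ih hklt
      have hstep : GridStep (P.getD k (0,0)) (P.getD (k+1) (0,0)) := by
        have := List.isChain_iff_getElem.mp hchain k (by omega)
        rw [List.getD_eq_getElem P (0,0) hklt, List.getD_eq_getElem P (0,0) hk]
        exact this
      have hfk : f ⟨k+1, hk⟩
          = decide ((P.getD (k+1) (0,0)).2 = (P.getD k (0,0)).2 + 1) := by
        show (if k + 1 = 0 then true
          else decide ((P.getD (k+1) (0,0)).2 = (P.getD k (0,0)).2 + 1)) = _
        rw [if_neg (Nat.succ_ne_zero k)]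
      have hc := count_take_succ w (k+1) (by omega)
      rw [hwget (k+1) hk, hfk] at hc
      have hle : (w.take (k+1)).count true ≤ k + 1 := count_take_le w (k+1)
      rcases hstep with hs | hs
      · -- right move: second coordinate unchanged
        have hne : ¬ ((P.getD (k+1) (0,0)).2 = (P.getD k (0,0)).2 + 1) := by
          rw [hs]; simp
        rw [decide_eq_false hne, if_neg (by simp)] at hc
        rw [hs, ihk, hc]
        simp only [Prod.mk.injEq]
        omega
      · -- up move
        have hyes : (P.getD (k+1) (0,0)).2 = (P.getD k (0,0)).2 + 1 := by
          rw [hs]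
        rw [decide_eq_true hyes, if_pos rfl] at hc
        rw [hs, ihk, hc]
        simp only [Prod.mk.injEq]
        exact ⟨by omega, trivial⟩
  -- count of all trues is n
  have hcount : w.count true = n := by
    have hl := inv (P.length - 1) (by omega)
    rw [List.getLast?_eq_getElem?] at hlast
    have : P.getD (P.length - 1) (0,0) = (r * n, n) := by
      rw [List.getD_eq_getElem?_getD, hlast]; rfl
    rw [this] at hl
    have h2 := congrArg Prod.snd hl
    simp only [] at h2
    have he : P.length - 1 + 1 = P.length := by omega
    rw [he, ← hwlen, List.take_length] at h2
    exact h2.symm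
  refine ⟨w, by omega, hcount, ?_, ?_⟩
  · -- Good
    intro j h1 h2
    rw [List.length_map] at h2
    rw [S_take r w j (by omega)]
    have hj := inv (j - 1) (by omega)
    have he1 : j - 1 + 2 = j + 1 := by omega
    have he2 : j - 1 + 1 = j := by omega
    rw [he1, he2] at hj
    have hmem : P.getD (j-1) (0,0) ∈ P := by
      rw [List.getD_eq_getElem P (0,0) (show j - 1 < P.length by omega)]
      exact List.getElem_mem _
    have hb := hbound _ hmem
    rw [hj] at hb
    simp only [] at hb
    have hle : (w.take j).count true ≤ j := count_take_le w j
    have hcast : ((r * ((w.take j).count true) : ℕ) : ℤ)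
        = (r:ℤ) * (((w.take j).count true : ℕ) : ℤ) := by push_cast; ring
    omega
  · -- pathOf w = P
    apply List.ext_getElem?
    intro k
    by_cases hk : k < P.length
    · rw [pathOf_getElem? w k (by omega), List.getElem?_eq_getElem hk]
      rw [← List.getD_eq_getElem P (0,0) hk, inv k hk]
    · rw [List.getElem?_eq_none (by rw [pathOf, List.length_map, List.length_range]; omega),
        List.getElem?_eq_none (by omega)]

lemma ofFn_of_list {L : ℕ} (w : List Bool) (h : w.length = L) :
    List.ofFn (fun i : Fin L => w[(i : ℕ)]'(by omega)) = w := by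
  apply List.ext_getElem (by simp [h])
  intro k h1 h2
  simp

end RatCat6


/-- The number `N` of `(rn, n)`-Dyck paths satisfies
`((r+1)n - 1) * N = binom((r+1)n - 1, n)`, i.e. `N` is the rational Catalan number
`Cat(n, rn - 1) = (1/(rn - 1 + n)) * binom(rn - 1 + n, n)`. -/
theorem dyckpaths_stmt12 (r n : ℕ) (hr : 0 < r) (hn : 0 < n) :
    ((r + 1) * n - 1) * {L : List (ℕ × ℕ) | IsRatDyckPath r n L}.ncard =
      Nat.choose ((r + 1) * n - 1) n := by
  open RatCat RatCat2 RatCat3 RatCat4 RatCat5 RatCat6 in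
  have hL : (r + 1) * n - 1 = r * n + n - 1 := by rw [add_mul, one_mul]
  have hrn : 0 < r * n := Nat.mul_pos hr hn
  set L := r * n + n - 1 with hLdef
  set G := Finset.univ.filter (fun f : Fin L → Bool =>
    (List.ofFn f).count true = n ∧ RatCat.Good ((List.ofFn f).map (RatCat3.bval r))) with hG
  have hset : {P : List (ℕ × ℕ) | IsRatDyckPath r n P}
      = ↑(G.image fun f => RatCat5.pathOf (List.ofFn f)) := by
    ext P
    simp only [Set.mem_setOf_eq, Finset.coe_image, Set.mem_image, Finset.mem_coe,
      hG, Finset.mem_filter, Finset.mem_univ, true_and]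
    constructor
    · intro hP
      obtain ⟨w, hw1, hw2, hw3, hw4⟩ := RatCat6.dyck_eq_pathOf r n hr hn P hP
      have hw1' : w.length = L := hw1
      refine ⟨fun i : Fin L => w[(i : ℕ)]'(by omega), ?_, ?_⟩
      · rw [RatCat6.ofFn_of_list w hw1']
        exact ⟨hw2, hw3⟩
      · rw [RatCat6.ofFn_of_list w hw1']
        exact hw4
    · rintro ⟨f, ⟨hf1, hf2⟩, rfl⟩
      exact RatCat5.pathOf_isDyck r n hr hn (List.ofFn f) (by simp [hLdef]) hf1 hf2
  rw [hL, hset, Set.ncard_coe_finset]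
  rw [Finset.card_image_of_injOn (by
    intro f hf g hg h
    have := RatCat5.pathOf_inj (List.ofFn f) (List.ofFn g) (by simp) h
    exact List.ofFn_inj.mp this)]
  exact RatCat4.L_mul_good_card r n L hr hn rfl
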